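/- Let d ∈ {1,2}, let Q : ℝᵈ → ℝ be continuous with 0 < Q(y) ≤ C e^{−δ|y|} for some C, δ > 0, and let z : ℝᵈ → ℂ be bounded with |z(x)| ≤ C₀(|x − x₀|^{m'} + τ) for |x − x₀| < 1 and some m' ∈ ℕ, τ ≥ 0, C₀ > 0. Let λ ∈ (0,1], α ∈ ℝᵈ with |α − x₀| ≤ λ. Then there is a constant C' (depending on C, δ, C₀, m', d but not on λ, τ) such that sup_y e^{−δ|y|/2} |z(λy + α)| ≤ C' (λ^{m'} + τ + e^{−δ'/λ}) for some δ' > 0. -/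

import Mathlib

open MeasureTheory

private lemma weight_poly_bound (δ : ℝ) (hδ : 0 < δ) (m' : ℕ) (t : ℝ) (ht : 0 ≤ t) :
    (t + 1) ^ m' * Real.exp (-δ * t / 2)
      ≤ (2 / δ) ^ m' * (Nat.factorial m' : ℝ) * Real.exp (δ / 2) := by
  have h1 : (t + 1) ^ m' = (2 / δ) ^ m' * (δ * (t + 1) / 2) ^ m' := by
    rw [← mul_pow]; congr 1; field_simp
  have h2 : (δ * (t + 1) / 2) ^ m' ≤ (Nat.factorial m' : ℝ) * Real.exp (δ * (t + 1) / 2) := by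
    have := Real.pow_div_factorial_le_exp (x := δ * (t + 1) / 2)
      (by positivity) m'
    have hf : (0 : ℝ) < (Nat.factorial m' : ℝ) := by exact_mod_cast Nat.factorial_pos m'
    rw [div_le_iff₀ hf] at this; linarith [this]
  have hpos : (0 : ℝ) < (2 / δ) ^ m' := by positivity
  calc (t + 1) ^ m' * Real.exp (-δ * t / 2)
      ≤ (2 / δ) ^ m' * ((Nat.factorial m' : ℝ) * Real.exp (δ * (t + 1) / 2)) * Real.exp (-δ * t / 2) := by
        rw [h1]
        exact mul_le_mul_of_nonneg_right (mul_le_mul_of_nonneg_left h2 hpos.le)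
          (Real.exp_nonneg _)
    _ = (2 / δ) ^ m' * (Nat.factorial m' : ℝ) * (Real.exp (δ * (t + 1) / 2) * Real.exp (-δ * t / 2)) := by
        ring
    _ = (2 / δ) ^ m' * (Nat.factorial m' : ℝ) * Real.exp (δ / 2) := by
        rw [← Real.exp_add]; ring_nf

set_option maxHeartbeats 1000000 in
/-- a function `z` flat of order `m'` at `x₀` (up to an error `τ`) is small
in the concentration parameter `λ`, uniformly against an exponentially decaying weight:
`sup_y e^{−δ|y|/2}|z(λy+α)| ≤ C'(λ^{m'} + τ + e^{−δ'/λ})`,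
with `C', δ'` independent of `λ, τ, α, z`. -/
theorem flat_residue_renormalized_bound (d : ℕ) (hd : d = 1 ∨ d = 2)
    (C δ C₀ : ℝ) (m' : ℕ) (x₀ : EuclideanSpace ℝ (Fin d))
    (hC : 0 < C) (hδ : 0 < δ) (hC₀ : 0 < C₀) :
    ∃ C' δ' : ℝ, 0 < C' ∧ 0 < δ' ∧
      ∀ (Q : EuclideanSpace ℝ (Fin d) → ℝ) (z : EuclideanSpace ℝ (Fin d) → ℂ)
        (τ lam : ℝ) (α : EuclideanSpace ℝ (Fin d)),
        Continuous Q →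
        (∀ y, 0 < Q y ∧ Q y ≤ C * Real.exp (-δ * ‖y‖)) →
        0 ≤ τ → 0 < lam → lam ≤ 1 → ‖α - x₀‖ ≤ lam →
        (∀ x, ‖z x‖ ≤ C₀) →
        (∀ x, ‖x - x₀‖ < 1 → ‖z x‖ ≤ C₀ * (‖x - x₀‖ ^ m' + τ)) →
        ∀ y : EuclideanSpace ℝ (Fin d),
          Real.exp (-δ * ‖y‖ / 2) * ‖z (lam • y + α)‖
            ≤ C' * (lam ^ m' + τ + Real.exp (-δ' / lam)) := by
  set M : ℝ := (2 / δ) ^ m' * (Nat.factorial m' : ℝ) * Real.exp (δ / 2) with hM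
  have hMpos : 0 < M := by
    have : (0 : ℝ) < (Nat.factorial m' : ℝ) := by exact_mod_cast Nat.factorial_pos m'
    positivity
  refine ⟨C₀ * (M + 1 + Real.exp (δ / 2)), δ / 2, by positivity, by positivity, ?_⟩
  intro Q z τ lam α _hQc _hQ hτ hlam hlam1 hα hzb hzflat y
  set x : EuclideanSpace ℝ (Fin d) := lam • y + α with hx
  have hxd : ‖x - x₀‖ ≤ lam * (‖y‖ + 1) := by
    have : x - x₀ = lam • y + (α - x₀) := by rw [hx]; abel
    rw [this]
    calc ‖lam • y + (α - x₀)‖ ≤ ‖lam • y‖ + ‖α - x₀‖ := norm_add_le _ _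
      _ ≤ lam * ‖y‖ + lam := by
          rw [norm_smul, Real.norm_eq_abs, abs_of_pos hlam]
          linarith
      _ = lam * (‖y‖ + 1) := by ring
  have hexp_nonneg : 0 ≤ Real.exp (-δ * ‖y‖ / 2) := Real.exp_nonneg _
  have hC'big : 0 < C₀ * (M + 1 + Real.exp (δ / 2)) := by positivity
  have hrhs_parts : 0 ≤ lam ^ m' + τ := by positivity
  by_cases hcase : ‖x - x₀‖ < 1
  · -- flat regime
    have hz := hzflat x hcase
    have hpow : ‖x - x₀‖ ^ m' ≤ lam ^ m' * (‖y‖ + 1) ^ m' := by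
      rw [← mul_pow]
      exact pow_le_pow_left₀ (norm_nonneg _) hxd m'
    have step : Real.exp (-δ * ‖y‖ / 2) * ‖z x‖
        ≤ C₀ * (lam ^ m' * ((‖y‖ + 1) ^ m' * Real.exp (-δ * ‖y‖ / 2)) + τ) := by
      have h1 : ‖z x‖ ≤ C₀ * (lam ^ m' * (‖y‖ + 1) ^ m' + τ) :=
        hz.trans (by nlinarith [hpow])
      have h2 : Real.exp (-δ * ‖y‖ / 2) ≤ 1 := by
        rw [Real.exp_le_one_iff]
        have : 0 ≤ δ * ‖y‖ := by positivity
        linarith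
      calc Real.exp (-δ * ‖y‖ / 2) * ‖z x‖
          ≤ Real.exp (-δ * ‖y‖ / 2) * (C₀ * (lam ^ m' * (‖y‖ + 1) ^ m' + τ)) :=
            mul_le_mul_of_nonneg_left h1 hexp_nonneg
        _ = C₀ * (lam ^ m' * ((‖y‖ + 1) ^ m' * Real.exp (-δ * ‖y‖ / 2))
              + τ * Real.exp (-δ * ‖y‖ / 2)) := by ring
        _ ≤ C₀ * (lam ^ m' * ((‖y‖ + 1) ^ m' * Real.exp (-δ * ‖y‖ / 2)) + τ) := by
            have := mul_le_mul_of_nonneg_left h2 hτ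
            have hlp : (0:ℝ) ≤ lam ^ m' * ((‖y‖ + 1) ^ m' * Real.exp (-δ * ‖y‖ / 2)) := by
              positivity
            nlinarith
    have hw := weight_poly_bound δ hδ m' ‖y‖ (norm_nonneg y)
    have hlp : (0:ℝ) ≤ lam ^ m' := by positivity
    calc Real.exp (-δ * ‖y‖ / 2) * ‖z x‖
        ≤ C₀ * (lam ^ m' * M + τ) := by
          refine step.trans ?_
          gcongr
      _ ≤ C₀ * (M + 1 + Real.exp (δ / 2)) * (lam ^ m' + τ + Real.exp (-(δ / 2) / lam)) := by
          have he : 0 ≤ Real.exp (-(δ / 2) / lam) := Real.exp_nonneg _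
          have h1 : (1:ℝ) ≤ M + 1 + Real.exp (δ / 2) := by
            nlinarith [Real.exp_nonneg (δ / 2)]
          nlinarith [mul_le_mul_of_nonneg_left h1 hτ, hτ, hlp,
            mul_nonneg hlp (Real.exp_nonneg (δ/2)), mul_nonneg hC₀.le he,
            mul_nonneg (mul_nonneg hC₀.le hMpos.le) he,
            mul_nonneg hC₀.le (mul_nonneg hlp (Real.exp_nonneg (δ/2))),
            mul_nonneg hC₀.le hτ]
  · -- far regime: ‖y‖ ≥ 1/lam - 1
    push_neg at hcase
    have hy : 1 / lam - 1 ≤ ‖y‖ := by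
      have h1 : 1 ≤ lam * (‖y‖ + 1) := hcase.trans hxd
      have h2 : 1 / lam ≤ ‖y‖ + 1 := by
        rw [div_le_iff₀ hlam]; nlinarith
      linarith
    have hexp : Real.exp (-δ * ‖y‖ / 2) ≤ Real.exp (δ / 2) * Real.exp (-(δ / 2) / lam) := by
      rw [← Real.exp_add, Real.exp_le_exp]
      have : -(δ / 2) / lam = -(δ / 2) * (1 / lam) := by ring
      rw [this]
      nlinarith
    calc Real.exp (-δ * ‖y‖ / 2) * ‖z x‖
        ≤ (Real.exp (δ / 2) * Real.exp (-(δ / 2) / lam)) * C₀ := by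
          exact mul_le_mul hexp (hzb x) (norm_nonneg _)
            (by positivity)
      _ ≤ C₀ * (M + 1 + Real.exp (δ / 2)) * (lam ^ m' + τ + Real.exp (-(δ / 2) / lam)) := by
          have he : 0 ≤ Real.exp (-(δ / 2) / lam) := Real.exp_nonneg _
          have hE : 0 < Real.exp (δ / 2) := Real.exp_pos _
          nlinarith [mul_nonneg (mul_nonneg hC₀.le hMpos.le) he,
            mul_nonneg hC₀.le he,
            mul_nonneg (mul_nonneg hC₀.le hE.le) (mul_nonneg hrhs_parts he),
            mul_nonneg (mul_nonneg hC₀.le (by linarith [hMpos] : (0:ℝ) ≤ M + 1)) hrhs_parts]
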